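/- Let A be an M×M Hermitian positive semidefinite random matrix and σ² ≥ 1 a constant. Then for every p > 0, E[log₂ det(I + (p/σ²) A)] ≥ E[log₂ det(I + p A)] − M log₂ σ², and if A has full rank almost surely, lim_{p→∞} (E[log₂ det(I + p A)] − E[log₂ det(I + (p/σ²) A)]) = r·log₂ σ² where r = rank(A) (a.s. constant), provided E[|log₂ det restricted to the positive eigenvalues|] < ∞. -/

import Mathlib

open Matrix MeasureTheory Filter
open scoped ComplexOrder ProbabilityTheory

section Aux

lemma det_one_add_smul_eig {M : ℕ} (A : Matrix (Fin M) (Fin M) ℂ) (hA : A.IsHermitian)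
    (p : ℝ) :
    (Matrix.det (1 + (p : ℂ) • A)).re = ∏ i, (1 + p * hA.eigenvalues i) := by
  classical
  have hU := (Matrix.mem_unitaryGroup_iff).mp (hA.eigenvectorUnitary).2
  set U : Matrix (Fin M) (Fin M) ℂ := (hA.eigenvectorUnitary : Matrix (Fin M) (Fin M) ℂ)
  have key : 1 + (p : ℂ) • A
      = U * (1 + (p : ℂ) • diagonal (RCLike.ofReal ∘ hA.eigenvalues)) * star U := by
    conv_lhs => rw [hA.spectral_theorem, Unitary.conjStarAlgAut_apply]
    rw [mul_add, add_mul, mul_one, hU, Matrix.mul_smul, Matrix.smul_mul]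
  rw [key, det_mul_right_comm, hU, one_mul]
  have : (1 : Matrix (Fin M) (Fin M) ℂ) + (p : ℂ) • diagonal (RCLike.ofReal ∘ hA.eigenvalues)
      = diagonal (fun i => ((1 + p * hA.eigenvalues i : ℝ) : ℂ)) := by
    ext i j
    rcases eq_or_ne i j with rfl | h
    · push_cast
      simp [Matrix.one_apply_eq, Matrix.diagonal_apply_eq]
    · simp [Matrix.one_apply_ne h, Matrix.diagonal_apply_ne _ h]
  rw [this, det_diagonal, ← Complex.ofReal_prod, Complex.ofReal_re]

lemma prod_one_le' {M : ℕ} (lam : Fin M → ℝ) (hlam : ∀ i, 0 ≤ lam i) {p : ℝ} (hp : 0 ≤ p) :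
    (1 : ℝ) ≤ ∏ i, (1 + p * lam i) := by
  calc (1:ℝ) = ∏ _i : Fin M, 1 := by simp
  _ ≤ ∏ i, (1 + p * lam i) :=
    Finset.prod_le_prod (fun i _ => zero_le_one) (fun i _ => by nlinarith [hlam i])

lemma prod_mono' {M : ℕ} (lam : Fin M → ℝ) (hlam : ∀ i, 0 ≤ lam i) {a b : ℝ}
    (ha : 0 ≤ a) (hab : a ≤ b) :
    (∏ i, (1 + a * lam i)) ≤ ∏ i, (1 + b * lam i) :=
  Finset.prod_le_prod (fun i _ => by nlinarith [hlam i])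
    (fun i _ => by nlinarith [hlam i])

lemma prod_le_pow_mul' {M : ℕ} (lam : Fin M → ℝ) (hlam : ∀ i, 0 ≤ lam i) {p σ2 : ℝ}
    (hp : 0 ≤ p) (hσ2 : 1 ≤ σ2) :
    (∏ i, (1 + p * lam i)) ≤ σ2 ^ M * ∏ i, (1 + (p / σ2) * lam i) := by
  have h0 : (0:ℝ) < σ2 := lt_of_lt_of_le one_pos hσ2
  have : σ2 ^ M * ∏ i, (1 + (p / σ2) * lam i) = ∏ i : Fin M, (σ2 * (1 + (p / σ2) * lam i)) := by
    rw [Finset.prod_mul_distrib, Finset.prod_const]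
    simp
  rw [this]
  refine Finset.prod_le_prod (fun i _ => by nlinarith [hlam i]) (fun i _ => ?_)
  have : σ2 * (1 + p / σ2 * lam i) = σ2 + p * lam i := by field_simp
  rw [this]
  nlinarith [hlam i]

lemma tendsto_gap_aux {M : ℕ} (lam : Fin M → ℝ) (hlam : ∀ i, 0 ≤ lam i) (σ2 : ℝ)
    (hσ2 : 1 ≤ σ2) :
    Tendsto (fun p : ℝ =>
        Real.log (∏ i, (1 + p * lam i)) - Real.log (∏ i, (1 + (p / σ2) * lam i)))
      atTop (nhds ((Fintype.card {i // lam i ≠ 0}) * Real.log σ2)) := by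
  classical
  have h0 : (0:ℝ) < σ2 := lt_of_lt_of_le one_pos hσ2
  have hsum : Tendsto (fun p : ℝ =>
      ∑ i : Fin M, (Real.log (1 + p * lam i) - Real.log (1 + (p / σ2) * lam i)))
      atTop (nhds (∑ i : Fin M, (if lam i ≠ 0 then Real.log σ2 else 0))) := by
    refine tendsto_finset_sum _ (fun i _ => ?_)
    by_cases hi : lam i = 0
    · simp [hi]
    · simp only [hi, if_true, ne_eq, not_false_eq_true]
      have hli : 0 < lam i := lt_of_le_of_ne (hlam i) (Ne.symm hi)
      have hd : Tendsto (fun p : ℝ => (p⁻¹ + lam i) / (p⁻¹ + lam i / σ2)) atTop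
          (nhds σ2) := by
        have h1 : Tendsto (fun p : ℝ => p⁻¹ + lam i) atTop (nhds (0 + lam i)) :=
          tendsto_inv_atTop_zero.add tendsto_const_nhds
        have h2 : Tendsto (fun p : ℝ => p⁻¹ + lam i / σ2) atTop (nhds (0 + lam i / σ2)) :=
          tendsto_inv_atTop_zero.add tendsto_const_nhds
        have hne : (0 : ℝ) + lam i / σ2 ≠ 0 := by positivity
        have := h1.div h2 hne
        rw [zero_add, zero_add, div_div_cancel₀ hli.ne'] at this
        exact this
      have hlog : Tendsto (fun p : ℝ => Real.log ((p⁻¹ + lam i) / (p⁻¹ + lam i / σ2)))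
          atTop (nhds (Real.log σ2)) :=
        ((Real.continuousAt_log (by positivity)).tendsto).comp hd
      refine hlog.congr' ?_
      filter_upwards [eventually_gt_atTop (0:ℝ)] with p hp
      have hpl : (0:ℝ) < 1 + p * lam i := by nlinarith
      have hpl2 : (0:ℝ) < 1 + p / σ2 * lam i := by
        have := mul_nonneg (div_nonneg hp.le h0.le) (hlam i); linarith
      have e1 : (p⁻¹ + lam i) / (p⁻¹ + lam i / σ2) = (1 + p * lam i) / (1 + p / σ2 * lam i) := by
        have hp' : (0:ℝ) < p⁻¹ := by positivity
        rw [div_eq_div_iff (by positivity) (by positivity)]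
        field_simp
      rw [e1, Real.log_div hpl.ne' hpl2.ne']
  have hcard : (∑ i : Fin M, (if lam i ≠ 0 then Real.log σ2 else 0))
      = (Fintype.card {i // lam i ≠ 0}) * Real.log σ2 := by
    rw [Finset.sum_ite, Finset.sum_const, Finset.sum_const, Fintype.card_subtype]
    simp [mul_comm]
  rw [← hcard]
  refine hsum.congr' ?_
  filter_upwards [eventually_gt_atTop (0:ℝ)] with p hp
  have key : ∀ (q : ℝ), 0 ≤ q →
      Real.log (∏ i, (1 + q * lam i)) = ∑ i : Fin M, Real.log (1 + q * lam i) := by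
    intro q hq
    exact Real.log_prod (fun i _ => by nlinarith [hlam i, mul_nonneg hq (hlam i)])
  rw [key p hp.le, key (p / σ2) (div_nonneg hp.le h0.le), Finset.sum_sub_distrib]

end Aux

/-- Noise scaling costs exactly `r log₂ σ²` at high SNR: for a random Hermitian PSD
matrix `A` and `σ² ≥ 1`, `E[log₂ det(I + (p/σ²)A)] ≥ E[log₂ det(I + p A)] - M log₂ σ²`,
and if `A` has a.s. constant rank `r` then
`E[log₂ det(I + p A)] - E[log₂ det(I + (p/σ²)A)] → r log₂ σ²` as `p → ∞`. -/
theorem noise_scaling_highSNR_gap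
    {Ω : Type*} [MeasureSpace Ω] [IsProbabilityMeasure (ℙ : Measure Ω)]
    (M : ℕ) (A : Ω → Matrix (Fin M) (Fin M) ℂ)
    (hmeas : ∀ i j, Measurable fun ω => A ω i j)
    (hA : ∀ ω, (A ω).PosSemidef) (σ2 : ℝ) (hσ2 : 1 ≤ σ2)
    (hint : ∀ p : ℝ, 0 < p → Integrable (fun ω =>
      Real.logb 2 (Matrix.det (1 + (p : ℂ) • A ω)).re))
    (hdom : Integrable (fun ω => |Real.log (Matrix.det (1 + A ω)).re|)) :
    (∀ p : ℝ, 0 < p →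
      (∫ ω, Real.logb 2 (Matrix.det (1 + (p : ℂ) • A ω)).re) - M * Real.logb 2 σ2 ≤
        ∫ ω, Real.logb 2 (Matrix.det (1 + ((p / σ2 : ℝ) : ℂ) • A ω)).re) ∧
    ∀ r : ℕ, (∀ᵐ ω, (A ω).rank = r) →
      Tendsto (fun p : ℝ =>
          (∫ ω, Real.logb 2 (Matrix.det (1 + (p : ℂ) • A ω)).re) -
            ∫ ω, Real.logb 2 (Matrix.det (1 + ((p / σ2 : ℝ) : ℂ) • A ω)).re)
        atTop (nhds (r * Real.logb 2 σ2)) := by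
  classical
  have h0 : (0:ℝ) < σ2 := lt_of_lt_of_le one_pos hσ2
  set lam : Ω → Fin M → ℝ := fun ω => (hA ω).1.eigenvalues with hlam_def
  have hnn : ∀ ω i, 0 ≤ lam ω i := fun ω i => (hA ω).eigenvalues_nonneg i
  have hre : ∀ (q : ℝ) (ω : Ω),
      (Matrix.det (1 + (q : ℂ) • A ω)).re = ∏ i, (1 + q * lam ω i) :=
    fun q ω => det_one_add_smul_eig (A ω) (hA ω).1 q
  -- pointwise bounds for 0 < p :
  have hFnonneg : ∀ (p : ℝ), 0 < p → ∀ ω : Ω,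
      Real.logb 2 (Matrix.det (1 + ((p / σ2 : ℝ) : ℂ) • A ω)).re ≤
      Real.logb 2 (Matrix.det (1 + (p : ℂ) • A ω)).re := by
    intro p hp ω
    rw [hre p ω, hre (p / σ2) ω]
    have h1 : (1:ℝ) ≤ ∏ i, (1 + (p / σ2) * lam ω i) :=
      prod_one_le' _ (hnn ω) (div_nonneg hp.le h0.le)
    exact Real.logb_le_logb_of_le one_lt_two (by linarith)
      (prod_mono' _ (hnn ω) (div_nonneg hp.le h0.le) (div_le_self hp.le hσ2))
  have hFle : ∀ (p : ℝ), 0 < p → ∀ ω : Ω,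
      Real.logb 2 (Matrix.det (1 + (p : ℂ) • A ω)).re ≤
      Real.logb 2 (Matrix.det (1 + ((p / σ2 : ℝ) : ℂ) • A ω)).re + M * Real.logb 2 σ2 := by
    intro p hp ω
    rw [hre p ω, hre (p / σ2) ω]
    have h1 : (1:ℝ) ≤ ∏ i, (1 + p * lam ω i) := prod_one_le' _ (hnn ω) hp.le
    have h1' : (1:ℝ) ≤ ∏ i, (1 + (p / σ2) * lam ω i) :=
      prod_one_le' _ (hnn ω) (div_nonneg hp.le h0.le)
    have h2 := prod_le_pow_mul' (lam ω) (hnn ω) hp.le hσ2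
    have := Real.logb_le_logb_of_le one_lt_two (by linarith : (0:ℝ) < ∏ i, (1 + p * lam ω i)) h2
    rwa [Real.logb_mul (by positivity) (by linarith), Real.logb_pow, add_comm] at this
  refine ⟨?_, ?_⟩
  · -- part 1
    intro p hp
    have hpσ : 0 < p / σ2 := div_pos hp h0
    have hcalc :
        (∫ ω, Real.logb 2 (Matrix.det (1 + (p : ℂ) • A ω)).re) ≤
        (∫ ω, Real.logb 2 (Matrix.det (1 + ((p / σ2 : ℝ) : ℂ) • A ω)).re) +
          M * Real.logb 2 σ2 := by
      calc (∫ ω, Real.logb 2 (Matrix.det (1 + (p : ℂ) • A ω)).re)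
          ≤ ∫ ω, (Real.logb 2 (Matrix.det (1 + ((p / σ2 : ℝ) : ℂ) • A ω)).re +
              M * Real.logb 2 σ2) :=
            integral_mono (hint p hp) ((hint _ hpσ).add (integrable_const _)) (hFle p hp)
        _ = (∫ ω, Real.logb 2 (Matrix.det (1 + ((p / σ2 : ℝ) : ℂ) • A ω)).re) +
              M * Real.logb 2 σ2 := by
            rw [integral_add (hint _ hpσ) (integrable_const _), integral_const]
            simp
    linarith
  · -- part 2
    intro r hr
    have hbnd : (0:ℝ) ≤ Real.logb 2 σ2 := Real.logb_nonneg one_lt_two hσ2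
    set F : ℝ → Ω → ℝ := fun p ω =>
      Real.logb 2 (Matrix.det (1 + (p : ℂ) • A ω)).re -
        Real.logb 2 (Matrix.det (1 + ((p / σ2 : ℝ) : ℂ) • A ω)).re with hF_def
    have hFint : ∀ p : ℝ, 0 < p → Integrable (F p) :=
      fun p hp => (hint p hp).sub (hint _ (div_pos hp h0))
    have hmain : Tendsto (fun p : ℝ => ∫ ω, F p ω) atTop (nhds (r * Real.logb 2 σ2)) := by
      have hconst : (r : ℝ) * Real.logb 2 σ2 = ∫ _ω : Ω, (r : ℝ) * Real.logb 2 σ2 := by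
        rw [integral_const]; simp
      rw [hconst]
      refine tendsto_integral_filter_of_dominated_convergence
        (fun _ => (M : ℝ) * Real.logb 2 σ2) ?_ ?_ (integrable_const _) ?_
      · filter_upwards [eventually_gt_atTop (0:ℝ)] with p hp
        exact (hFint p hp).aestronglyMeasurable
      · filter_upwards [eventually_gt_atTop (0:ℝ)] with p hp
        refine Eventually.of_forall (fun ω => ?_)
        rw [Real.norm_eq_abs, abs_le]
        constructor
        · have := hFnonneg p hp ω
          have hM : (0:ℝ) ≤ (M:ℝ) * Real.logb 2 σ2 := by positivity
          simp only [hF_def]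
          linarith
        · have := hFle p hp ω
          simp only [hF_def]
          linarith
      · filter_upwards [hr] with ω hω
        have hcard : (Fintype.card {i // lam ω i ≠ 0} : ℝ) = (r : ℝ) := by
          have := (hA ω).1.rank_eq_card_non_zero_eigs
          rw [hω] at this
          exact_mod_cast this.symm
        have htd := (tendsto_gap_aux (lam ω) (hnn ω) σ2 hσ2).div_const (Real.log 2)
        have hlim_eq : (Fintype.card {i // lam ω i ≠ 0}) * Real.log σ2 / Real.log 2
            = (r : ℝ) * Real.logb 2 σ2 := by
          rw [Real.logb, ← hcard]; ring
        rw [hlim_eq] at htd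
        refine htd.congr (fun p => ?_)
        simp only [hF_def, hre p ω, hre (p / σ2) ω, Real.logb, sub_div]
    refine hmain.congr' ?_
    filter_upwards [eventually_gt_atTop (0:ℝ)] with p hp
    rw [integral_sub (hint p hp) (hint _ (div_pos hp h0))]
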